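/- For every natural number k there exist three sets B₁, B₂, B₃ ⊂ ℝ³, each of cardinality k, such that the set (1/2)(B₁+B₂) ∪ (1/2)(B₂+B₃) ∪ (1/2)(B₃+B₁) of midpoints between points in different sets has exactly 3k² points and is convexly independent. -/

import Mathlib

open Pointwise Filter

noncomputable section

/-- A set in `ℝ^d` is convexly independent if no point of it lies in the
convex hull of the other points. -/
def ConvInd {d : ℕ} (S : Set (Fin d → ℝ)) : Prop :=
  ∀ p ∈ S, p ∉ convexHull ℝ (S \ {p})

/-- `Efun d n` : the maximum, over `n`-point sets `P ⊂ ℝ^d`, of the number of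
unordered pairs of distinct points of `P` whose midpoints are pairwise distinct
and form a convexly independent set.  Unordered pairs are encoded as ordered
pairs with the reversed pair excluded. -/
def Efun (d n : ℕ) : ℕ :=
  sSup {k | ∃ (P : Finset (Fin d → ℝ)) (T : Finset ((Fin d → ℝ) × (Fin d → ℝ))),
    P.card = n ∧
    (∀ e ∈ T, e.1 ∈ P ∧ e.2 ∈ P ∧ e.1 ≠ e.2 ∧ (e.2, e.1) ∉ T) ∧
    Set.InjOn (fun e : (Fin d → ℝ) × (Fin d → ℝ) => midpoint ℝ e.1 e.2) ↑T ∧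
    ConvInd ((fun e : (Fin d → ℝ) × (Fin d → ℝ) => midpoint ℝ e.1 e.2) '' ↑T) ∧
    T.card = k}

/-- `Mfun d m n` : the maximum, over `m`-point sets `P` and `n`-point sets `Q` in `ℝ^d`,
of the size of a convexly independent subset of the Minkowski sum `P + Q`. -/
def Mfun (d m n : ℕ) : ℕ :=
  sSup {k | ∃ P Q S : Finset (Fin d → ℝ),
    P.card = m ∧ Q.card = n ∧
    (S : Set (Fin d → ℝ)) ⊆ (P : Set (Fin d → ℝ)) + (Q : Set (Fin d → ℝ)) ∧
    ConvInd (S : Set (Fin d → ℝ)) ∧ S.card = k}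

/-- A norm on `ℝ^d` whose unit ball is strictly convex (the unit sphere contains
no nondegenerate segment, expressed via midpoints of distinct unit vectors). -/
structure StrictNorm (d : ℕ) where
  toFun : (Fin d → ℝ) → ℝ
  eq_zero_iff : ∀ x, toFun x = 0 ↔ x = 0
  smul_eq : ∀ (a : ℝ) (x : Fin d → ℝ), toFun (a • x) = |a| * toFun x
  add_le : ∀ x y, toFun (x + y) ≤ toFun x + toFun y
  strictly_convex : ∀ x y, toFun x = 1 → toFun y = 1 → x ≠ y →
    toFun ((1 / 2 : ℝ) • (x + y)) < 1

/-- A (not necessarily strictly convex) norm on `ℝ^d`. -/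
structure NormOn (d : ℕ) where
  toFun : (Fin d → ℝ) → ℝ
  eq_zero_iff : ∀ x, toFun x = 0 ↔ x = 0
  smul_eq : ∀ (a : ℝ) (x : Fin d → ℝ), toFun (a • x) = |a| * toFun x
  add_le : ∀ x y, toFun (x + y) ≤ toFun x + toFun y

/-- `Wfun d n` : the maximum, over `n`-point sets `S ⊂ ℝ^d` and strictly convex
norms on `ℝ^d`, of the number of pairwise nonparallel unit-distance pairs in `S`.
(The nonparallelity condition between distinct ordered pairs automatically rules
out listing any unordered pair twice.) -/
def Wfun (d n : ℕ) : ℕ :=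
  sSup {k | ∃ (S : Finset (Fin d → ℝ)) (ν : StrictNorm d)
      (T : Finset ((Fin d → ℝ) × (Fin d → ℝ))),
    S.card = n ∧
    (∀ e ∈ T, e.1 ∈ S ∧ e.2 ∈ S ∧ ν.toFun (e.1 - e.2) = 1) ∧
    (∀ e ∈ T, ∀ f ∈ T, e ≠ f → ∀ c : ℝ, e.1 - e.2 ≠ c • (f.1 - f.2)) ∧
    T.card = k}

/-- `Ufun d n` : the maximum, over `n`-point sets `S ⊂ ℝ^d` and strictly convex
norms on `ℝ^d`, of the number of unordered unit-distance pairs in `S`. -/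
def Ufun (d n : ℕ) : ℕ :=
  sSup {k | ∃ (S : Finset (Fin d → ℝ)) (ν : StrictNorm d)
      (T : Finset ((Fin d → ℝ) × (Fin d → ℝ))),
    S.card = n ∧
    (∀ e ∈ T, e.1 ∈ S ∧ e.2 ∈ S ∧ e.1 ≠ e.2 ∧ ν.toFun (e.1 - e.2) = 1 ∧ (e.2, e.1) ∉ T) ∧
    T.card = k}

/-- `Dfun d n` : the maximum, over `n`-point sets `S ⊂ ℝ^d` and strictly convex
norms on `ℝ^d`, of the number of unordered diameter pairs in `S` (pairs of points
whose distance equals the diameter `D` of `S` in the norm). -/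
def Dfun (d n : ℕ) : ℕ :=
  sSup {k | ∃ (S : Finset (Fin d → ℝ)) (ν : StrictNorm d)
      (T : Finset ((Fin d → ℝ) × (Fin d → ℝ))) (D : ℝ),
    S.card = n ∧
    (∀ p ∈ S, ∀ q ∈ S, ν.toFun (p - q) ≤ D) ∧
    (∃ p ∈ S, ∃ q ∈ S, ν.toFun (p - q) = D) ∧
    (∀ e ∈ T, e.1 ∈ S ∧ e.2 ∈ S ∧ e.1 ≠ e.2 ∧ ν.toFun (e.1 - e.2) = D ∧ (e.2, e.1) ∉ T) ∧
    T.card = k}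

/-- A family of sets in `ℝ^d` is strictly antipodal if for each pair of points
`p ∈ A i`, `q ∈ A j` with `i ≠ j` there is a linear functional `φ` with
`φ p < φ r < φ q` for every other point `r` of the union. -/
def StrictlyAntipodal {d : ℕ} {ι : Type*} (A : ι → Set (Fin d → ℝ)) : Prop :=
  ∀ i j, i ≠ j → ∀ p ∈ A i, ∀ q ∈ A j, ∃ φ : (Fin d → ℝ) →ₗ[ℝ] ℝ,
    ∀ r ∈ ⋃ t, A t, r ≠ p → r ≠ q → φ p < φ r ∧ φ r < φ q

/-- `aconst d` = `a(d)` : the largest `k` such that for every `m` there is a strictly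
antipodal family of `k` sets in `ℝ^d`, each of size at least `m`. -/
def aconst (d : ℕ) : ℕ :=
  sSup {k | ∀ m : ℕ, ∃ A : Fin k → Finset (Fin d → ℝ),
    (∀ i, m ≤ (A i).card) ∧ StrictlyAntipodal (fun i => ((A i : Set (Fin d → ℝ))))}

/-- The set of midpoints between points in different members of a family of finite sets. -/
def midSet {d : ℕ} {ι : Type*} (B : ι → Finset (Fin d → ℝ)) : Set (Fin d → ℝ) :=
  {x | ∃ i j, i ≠ j ∧ ∃ p ∈ B i, ∃ q ∈ B j, x = midpoint ℝ p q}

/-- The set of differences between points in different members of a family of sets. -/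
def diffSet {d : ℕ} {ι : Type*} (A : ι → Set (Fin d → ℝ)) : Set (Fin d → ℝ) :=
  {x | ∃ i j, i ≠ j ∧ ∃ p ∈ A i, ∃ q ∈ A j, x = p - q}


namespace ThreeAux

/-- parameter values -/
def tv (k j : ℕ) : ℝ := 2/5 + (j : ℝ) / (5*k)

def T (k : ℕ) : Finset ℝ := (Finset.range k).image (tv k)

lemma T_card (k : ℕ) : (T k).card = k := by
  rw [T, Finset.card_image_of_injOn, Finset.card_range]
  intro a ha b hb h
  simp only [Finset.coe_range, Set.mem_Iio] at ha hb
  have hk : 0 < k := Nat.pos_of_ne_zero (by rintro rfl; exact Nat.not_lt_zero a ha)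
  have h5 : (0:ℝ) < 5*k := by positivity
  have h' : (a:ℝ) / (5*k) = (b:ℝ) / (5*k) := by
    have := h; unfold tv at this; linarith
  field_simp at h'; exact_mod_cast h' 

lemma T_mem {k : ℕ} {t : ℝ} (h : t ∈ T k) : 2/5 ≤ t ∧ t ≤ 3/5 := by
  rw [T, Finset.mem_image] at h
  obtain ⟨j, hj, rfl⟩ := h
  rw [Finset.mem_range] at hj
  have hk : 0 < k := Nat.pos_of_ne_zero (by rintro rfl; exact Nat.not_lt_zero j hj)
  have h5 : (0:ℝ) < 5*k := by positivity
  have hjk : (j:ℝ) ≤ k := by exact_mod_cast Nat.le_of_lt hj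
  have h1 : (0:ℝ) ≤ (j:ℝ) / (5*k) := by positivity
  have h2 : (j:ℝ) / (5*k) ≤ 1/5 := by
    rw [div_le_iff₀ h5]; nlinarith
  constructor <;> (unfold tv; linarith)

def cc (t : ℝ) : ℝ := Real.sqrt (1 - t^2)

lemma cc_sq {t : ℝ} (h1 : 2/5 ≤ t) (h2 : t ≤ 3/5) : cc t ^ 2 + t ^ 2 = 1 := by
  have h0 : (0:ℝ) ≤ 1 - t^2 := by nlinarith
  rw [cc, Real.sq_sqrt h0]; ring

lemma cc_lb {t : ℝ} (h1 : 2/5 ≤ t) (h2 : t ≤ 3/5) : 4/5 ≤ cc t := by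
  have : (4/5:ℝ) = Real.sqrt ((4/5)^2) := (Real.sqrt_sq (by norm_num)).symm
  rw [this, cc]; apply Real.sqrt_le_sqrt; nlinarith

lemma cc_ub {t : ℝ} (h1 : 2/5 ≤ t) (h2 : t ≤ 3/5) : cc t ≤ 1 := by
  rw [cc]
  have := Real.sqrt_le_sqrt (show (1:ℝ) - t^2 ≤ 1 by nlinarith)
  simpa using this

lemma cc_inj {a b : ℝ} (ha1 : 2/5 ≤ a) (ha2 : a ≤ 3/5) (hb1 : 2/5 ≤ b) (hb2 : b ≤ 3/5)
    (h : cc a = cc b) : a = b := by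
  have h1 := cc_sq ha1 ha2
  have h2 := cc_sq hb1 hb2
  have hsq : a^2 = b^2 := by rw [h] at h1; linarith
  have hfac : (a - b) * (a + b) = 0 := by ring_nf; nlinarith [hsq]
  rcases mul_eq_zero.mp hfac with h' | h'
  · linarith
  · linarith

def f0 (t : ℝ) : Fin 3 → ℝ := ![100 + cc t, t, 100]
def f1 (t : ℝ) : Fin 3 → ℝ := ![100, 100 + cc t, t]
def f2 (t : ℝ) : Fin 3 → ℝ := ![t, 100, 100 + cc t]

def BB (k : ℕ) : Fin 3 → Finset (Fin 3 → ℝ) := ![(T k).image f0, (T k).image f1, (T k).image f2]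

def dotL (n : Fin 3 → ℝ) : (Fin 3 → ℝ) →ₗ[ℝ] ℝ where
  toFun w := n 0 * w 0 + n 1 * w 1 + n 2 * w 2
  map_add' x y := by simp only [Pi.add_apply]; ring
  map_smul' a x := by simp only [Pi.smul_apply, smul_eq_mul, RingHom.id_apply]; ring

lemma dotL_apply (n w : Fin 3 → ℝ) : dotL n w = n 0 * w 0 + n 1 * w 1 + n 2 * w 2 := rfl

lemma mid_apply (p q : Fin 3 → ℝ) (i : Fin 3) : midpoint ℝ p q i = (p i + q i)/2 := by
  simp [midpoint_eq_smul_add, Pi.smul_apply, Pi.add_apply, smul_eq_mul]; ring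

lemma dotL_mid (n p q : Fin 3 → ℝ) :
    dotL n (midpoint ℝ p q) = (dotL n p + dotL n q)/2 := by
  simp only [dotL_apply, mid_apply]; ring

def n12 (s t : ℝ) : Fin 3 → ℝ := ![cc s * cc t, s * cc t, s * t]
def n23 (s t : ℝ) : Fin 3 → ℝ := ![s * t, cc s * cc t, s * cc t]
def n31 (s t : ℝ) : Fin 3 → ℝ := ![s * cc t, s * t, cc s * cc t]

/-- own-cluster inequality -/
lemma ineqA (s t s' t' A A' B B' : ℝ)
    (hs : 2/5 ≤ s) (hB : 4/5 ≤ B)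
    (hA : A^2 + s^2 = 1) (hA' : A'^2 + s'^2 = 1)
    (hBt : B^2 + t^2 = 1) (hB' : B'^2 + t'^2 = 1)
    (hne : s ≠ s' ∨ t ≠ t') :
    B*(A*A' + s*s') + s*(B*B' + t*t') < B + s := by
  have h1 : A*A' + s*s' ≤ 1 := by nlinarith [sq_nonneg (A-A'), sq_nonneg (s-s')]
  have h2 : B*B' + t*t' ≤ 1 := by nlinarith [sq_nonneg (B-B'), sq_nonneg (t-t')]
  have hsp : (0:ℝ) < s := by linarith
  have hBp : (0:ℝ) < B := by linarith
  rcases hne with h | h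
  · have hp : 0 < (s - s')^2 :=
      lt_of_le_of_ne (sq_nonneg _) (Ne.symm (pow_ne_zero 2 (sub_ne_zero_of_ne h)))
    have h1' : A*A' + s*s' < 1 := by nlinarith [sq_nonneg (A-A')]
    nlinarith
  · have hp : 0 < (t - t')^2 :=
      lt_of_le_of_ne (sq_nonneg _) (Ne.symm (pow_ne_zero 2 (sub_ne_zero_of_ne h)))
    have h2' : B*B' + t*t' < 1 := by nlinarith [sq_nonneg (B-B')]
    nlinarith

/-- next-cluster inequality -/
lemma ineqB (s t t' u' A B B' C' : ℝ)
    (hs1 : 2/5 ≤ s) (hs2 : s ≤ 3/5) (ht2 : t ≤ 3/5) (ht1 : 2/5 ≤ t)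
    (hu1 : 2/5 ≤ u') (hu2 : u' ≤ 3/5)
    (hA1 : 4/5 ≤ A) (hA2 : A ≤ 1) (hB1 : 4/5 ≤ B) (hB2 : B ≤ 1)
    (hC1 : 4/5 ≤ C') (hC2 : C' ≤ 1)
    (hBt : B^2 + t^2 = 1) (hB' : B'^2 + t'^2 = 1)
    (ht'1 : 2/5 ≤ t') (ht'2 : t' ≤ 3/5) (hB'1 : 4/5 ≤ B') (hB'2 : B' ≤ 1) :
    s*(B*B' + t*t') + (A*B*u' + s*t*C') < 100*B*(A - s) + B + s := by
  have h2 : B*B' + t*t' ≤ 1 := by nlinarith [sq_nonneg (B-B'), sq_nonneg (t-t')]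
  have hsp : (0:ℝ) < s := by linarith
  have h3 : s*(B*B' + t*t') ≤ s := by nlinarith
  have hAB : A*B ≤ 1 := by nlinarith
  have h4 : A*B*u' ≤ 1 * (3/5) := mul_le_mul hAB hu2 (by linarith) (by norm_num)
  have hst : s*t ≤ 9/25 := by nlinarith
  have h5 : s*t*C' ≤ (9/25) * 1 := mul_le_mul hst hC2 (by linarith) (by norm_num)
  have h6 : (16:ℝ) ≤ 100*B*(A - s) := by nlinarith
  linarith

/-- previous-cluster inequality -/
lemma ineqC (s t s' u' A A' B C' : ℝ)
    (hs1 : 2/5 ≤ s) (hs2 : s ≤ 3/5) (ht2 : t ≤ 3/5) (ht1 : 2/5 ≤ t)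
    (hu1 : 2/5 ≤ u') (hu2 : u' ≤ 3/5)
    (hA1 : 4/5 ≤ A) (hA2 : A ≤ 1) (hB1 : 4/5 ≤ B) (hB2 : B ≤ 1)
    (hC1 : 4/5 ≤ C') (hC2 : C' ≤ 1)
    (hA : A^2 + s^2 = 1) (hA' : A'^2 + s'^2 = 1)
    (hs'1 : 2/5 ≤ s') (hs'2 : s' ≤ 3/5) (hA'1 : 4/5 ≤ A') (hA'2 : A' ≤ 1) :
    A*B*u' + s*t*C' + B*(A*A' + s*s') < 100*(A*B - s*t) + B + s := by
  have h1 : A*A' + s*s' ≤ 1 := by nlinarith [sq_nonneg (A-A'), sq_nonneg (s-s')]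
  have hBp : (0:ℝ) < B := by linarith
  have h3 : B*(A*A' + s*s') ≤ B := by nlinarith
  have hAB : A*B ≤ 1 := by nlinarith
  have h4 : A*B*u' ≤ 1 * (3/5) := mul_le_mul hAB hu2 (by linarith) (by norm_num)
  have hst : s*t ≤ 9/25 := by nlinarith
  have h5 : s*t*C' ≤ (9/25) * 1 := mul_le_mul hst hC2 (by linarith) (by norm_num)
  have h6 : (28:ℝ) ≤ 100*(A*B - s*t) := by nlinarith
  linarith


@[simp] lemma f0_0 (t : ℝ) : f0 t 0 = 100 + cc t := rfl
@[simp] lemma f0_1 (t : ℝ) : f0 t 1 = t := rfl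
@[simp] lemma f0_2 (t : ℝ) : f0 t 2 = 100 := rfl
@[simp] lemma f1_0 (t : ℝ) : f1 t 0 = 100 := rfl
@[simp] lemma f1_1 (t : ℝ) : f1 t 1 = 100 + cc t := rfl
@[simp] lemma f1_2 (t : ℝ) : f1 t 2 = t := rfl
@[simp] lemma f2_0 (t : ℝ) : f2 t 0 = t := rfl
@[simp] lemma f2_1 (t : ℝ) : f2 t 1 = 100 := rfl
@[simp] lemma f2_2 (t : ℝ) : f2 t 2 = 100 + cc t := rfl
@[simp] lemma n12_0 (s t : ℝ) : n12 s t 0 = cc s * cc t := rfl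
@[simp] lemma n12_1 (s t : ℝ) : n12 s t 1 = s * cc t := rfl
@[simp] lemma n12_2 (s t : ℝ) : n12 s t 2 = s * t := rfl
@[simp] lemma n23_0 (s t : ℝ) : n23 s t 0 = s * t := rfl
@[simp] lemma n23_1 (s t : ℝ) : n23 s t 1 = cc s * cc t := rfl
@[simp] lemma n23_2 (s t : ℝ) : n23 s t 2 = s * cc t := rfl
@[simp] lemma n31_0 (s t : ℝ) : n31 s t 0 = s * cc t := rfl
@[simp] lemma n31_1 (s t : ℝ) : n31 s t 1 = s * t := rfl
@[simp] lemma n31_2 (s t : ℝ) : n31 s t 2 = cc s * cc t := rfl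

lemma BB_0 (k : ℕ) : BB k 0 = (T k).image f0 := rfl
lemma BB_1 (k : ℕ) : BB k 1 = (T k).image f1 := rfl
lemma BB_2 (k : ℕ) : BB k 2 = (T k).image f2 := rfl

lemma mem_midSet {k : ℕ} {x : Fin 3 → ℝ} (hx : x ∈ midSet (BB k)) :
    ∃ s ∈ T k, ∃ t ∈ T k,
      (x = midpoint ℝ (f0 s) (f1 t) ∨ x = midpoint ℝ (f1 s) (f2 t) ∨
        x = midpoint ℝ (f2 s) (f0 t)) := by
  obtain ⟨i, j, hij, p, hp, q, hq, rfl⟩ := hx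
  fin_cases i <;> fin_cases j <;>
    simp only [Fin.mk_zero, Fin.mk_one, show (⟨2,by norm_num⟩ : Fin 3) = 2 from rfl,
      BB_0, BB_1, BB_2, Finset.mem_image] at hp hq <;>
    [skip; skip; skip; skip; skip; skip; skip; skip; skip]
  · exact absurd rfl hij
  · obtain ⟨s, hs, rfl⟩ := hp; obtain ⟨t, ht, rfl⟩ := hq
    exact ⟨s, hs, t, ht, Or.inl rfl⟩
  · obtain ⟨s, hs, rfl⟩ := hp; obtain ⟨t, ht, rfl⟩ := hq
    exact ⟨t, ht, s, hs, Or.inr (Or.inr (midpoint_comm _ _))⟩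
  · obtain ⟨s, hs, rfl⟩ := hp; obtain ⟨t, ht, rfl⟩ := hq
    exact ⟨t, ht, s, hs, Or.inl (midpoint_comm _ _)⟩
  · exact absurd rfl hij
  · obtain ⟨s, hs, rfl⟩ := hp; obtain ⟨t, ht, rfl⟩ := hq
    exact ⟨s, hs, t, ht, Or.inr (Or.inl rfl)⟩
  · obtain ⟨s, hs, rfl⟩ := hp; obtain ⟨t, ht, rfl⟩ := hq
    exact ⟨s, hs, t, ht, Or.inr (Or.inr rfl)⟩
  · obtain ⟨s, hs, rfl⟩ := hp; obtain ⟨t, ht, rfl⟩ := hq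
    exact ⟨t, ht, s, hs, Or.inr (Or.inl (midpoint_comm _ _))⟩
  · exact absurd rfl hij


lemma sep12 {k : ℕ} {s t : ℝ} (hs : s ∈ T k) (ht : t ∈ T k) {x : Fin 3 → ℝ}
    (hx : x ∈ midSet (BB k)) (hne : x ≠ midpoint ℝ (f0 s) (f1 t)) :
    dotL (n12 s t) x < dotL (n12 s t) (midpoint ℝ (f0 s) (f1 t)) := by
  obtain ⟨s', hs', t', ht', hc⟩ := mem_midSet hx
  obtain ⟨hs1, hs2⟩ := T_mem hs; obtain ⟨ht1, ht2⟩ := T_mem ht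
  obtain ⟨hs'1, hs'2⟩ := T_mem hs'; obtain ⟨ht'1, ht'2⟩ := T_mem ht'
  have hA := cc_sq hs1 hs2; have hB := cc_sq ht1 ht2
  have hA' := cc_sq hs'1 hs'2; have hB' := cc_sq ht'1 ht'2
  have hA2 : cc t * cc s^2 + cc t * s^2 = cc t := by linear_combination (cc t) * hA
  have hB2 : s * cc t^2 + s * t^2 = s := by linear_combination s * hB
  rcases hc with rfl | rfl | rfl
  · have hor : s ≠ s' ∨ t ≠ t' := by
      by_contra hcon; push_neg at hcon
      obtain ⟨h1, h2⟩ := hcon; rw [h1, h2] at hne; exact hne rfl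
    have key := ineqA s t s' t' (cc s) (cc s') (cc t) (cc t') hs1 (cc_lb ht1 ht2)
      hA hA' hB hB' hor
    simp only [dotL_apply, mid_apply, f0_0, f0_1, f0_2, f1_0, f1_1, f1_2,
      n12_0, n12_1, n12_2]
    nlinarith [key, hA2, hB2]
  · have key := ineqB s t s' t' (cc s) (cc t) (cc s') (cc t') hs1 hs2 ht2 ht1
      ht'1 ht'2 (cc_lb hs1 hs2) (cc_ub hs1 hs2) (cc_lb ht1 ht2) (cc_ub ht1 ht2)
      (cc_lb ht'1 ht'2) (cc_ub ht'1 ht'2) hB hA' hs'1 hs'2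
      (cc_lb hs'1 hs'2) (cc_ub hs'1 hs'2)
    simp only [dotL_apply, mid_apply, f0_0, f0_1, f0_2, f1_0, f1_1, f1_2,
      f2_0, f2_1, f2_2, n12_0, n12_1, n12_2]
    nlinarith [key, hA2, hB2]
  · have key := ineqC s t t' s' (cc s) (cc t') (cc t) (cc s') hs1 hs2 ht2 ht1
      hs'1 hs'2 (cc_lb hs1 hs2) (cc_ub hs1 hs2) (cc_lb ht1 ht2) (cc_ub ht1 ht2)
      (cc_lb hs'1 hs'2) (cc_ub hs'1 hs'2) hA hB' ht'1 ht'2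
      (cc_lb ht'1 ht'2) (cc_ub ht'1 ht'2)
    simp only [dotL_apply, mid_apply, f0_0, f0_1, f0_2, f1_0, f1_1, f1_2,
      f2_0, f2_1, f2_2, n12_0, n12_1, n12_2]
    nlinarith [key, hA2, hB2]

lemma sep23 {k : ℕ} {s t : ℝ} (hs : s ∈ T k) (ht : t ∈ T k) {x : Fin 3 → ℝ}
    (hx : x ∈ midSet (BB k)) (hne : x ≠ midpoint ℝ (f1 s) (f2 t)) :
    dotL (n23 s t) x < dotL (n23 s t) (midpoint ℝ (f1 s) (f2 t)) := by
  obtain ⟨s', hs', t', ht', hc⟩ := mem_midSet hx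
  obtain ⟨hs1, hs2⟩ := T_mem hs; obtain ⟨ht1, ht2⟩ := T_mem ht
  obtain ⟨hs'1, hs'2⟩ := T_mem hs'; obtain ⟨ht'1, ht'2⟩ := T_mem ht'
  have hA := cc_sq hs1 hs2; have hB := cc_sq ht1 ht2
  have hA' := cc_sq hs'1 hs'2; have hB' := cc_sq ht'1 ht'2
  have hA2 : cc t * cc s^2 + cc t * s^2 = cc t := by linear_combination (cc t) * hA
  have hB2 : s * cc t^2 + s * t^2 = s := by linear_combination s * hB
  rcases hc with rfl | rfl | rfl
  · have key := ineqC s t t' s' (cc s) (cc t') (cc t) (cc s') hs1 hs2 ht2 ht1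
      hs'1 hs'2 (cc_lb hs1 hs2) (cc_ub hs1 hs2) (cc_lb ht1 ht2) (cc_ub ht1 ht2)
      (cc_lb hs'1 hs'2) (cc_ub hs'1 hs'2) hA hB' ht'1 ht'2
      (cc_lb ht'1 ht'2) (cc_ub ht'1 ht'2)
    simp only [dotL_apply, mid_apply, f0_0, f0_1, f0_2, f1_0, f1_1, f1_2,
      f2_0, f2_1, f2_2, n12_0, n12_1, n12_2, n23_0, n23_1, n23_2, n31_0, n31_1, n31_2]
    nlinarith [key, hA2, hB2]
  · have hor : s ≠ s' ∨ t ≠ t' := by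
      by_contra hcon; push_neg at hcon
      obtain ⟨h1, h2⟩ := hcon; rw [h1, h2] at hne; exact hne rfl
    have key := ineqA s t s' t' (cc s) (cc s') (cc t) (cc t') hs1 (cc_lb ht1 ht2)
      hA hA' hB hB' hor
    simp only [dotL_apply, mid_apply, f0_0, f0_1, f0_2, f1_0, f1_1, f1_2,
      f2_0, f2_1, f2_2, n12_0, n12_1, n12_2, n23_0, n23_1, n23_2, n31_0, n31_1, n31_2]
    nlinarith [key, hA2, hB2]
  · have key := ineqB s t s' t' (cc s) (cc t) (cc s') (cc t') hs1 hs2 ht2 ht1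
      ht'1 ht'2 (cc_lb hs1 hs2) (cc_ub hs1 hs2) (cc_lb ht1 ht2) (cc_ub ht1 ht2)
      (cc_lb ht'1 ht'2) (cc_ub ht'1 ht'2) hB hA' hs'1 hs'2
      (cc_lb hs'1 hs'2) (cc_ub hs'1 hs'2)
    simp only [dotL_apply, mid_apply, f0_0, f0_1, f0_2, f1_0, f1_1, f1_2,
      f2_0, f2_1, f2_2, n12_0, n12_1, n12_2, n23_0, n23_1, n23_2, n31_0, n31_1, n31_2]
    nlinarith [key, hA2, hB2]

lemma sep31 {k : ℕ} {s t : ℝ} (hs : s ∈ T k) (ht : t ∈ T k) {x : Fin 3 → ℝ}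
    (hx : x ∈ midSet (BB k)) (hne : x ≠ midpoint ℝ (f2 s) (f0 t)) :
    dotL (n31 s t) x < dotL (n31 s t) (midpoint ℝ (f2 s) (f0 t)) := by
  obtain ⟨s', hs', t', ht', hc⟩ := mem_midSet hx
  obtain ⟨hs1, hs2⟩ := T_mem hs; obtain ⟨ht1, ht2⟩ := T_mem ht
  obtain ⟨hs'1, hs'2⟩ := T_mem hs'; obtain ⟨ht'1, ht'2⟩ := T_mem ht'
  have hA := cc_sq hs1 hs2; have hB := cc_sq ht1 ht2
  have hA' := cc_sq hs'1 hs'2; have hB' := cc_sq ht'1 ht'2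
  have hA2 : cc t * cc s^2 + cc t * s^2 = cc t := by linear_combination (cc t) * hA
  have hB2 : s * cc t^2 + s * t^2 = s := by linear_combination s * hB
  rcases hc with rfl | rfl | rfl
  · have key := ineqB s t s' t' (cc s) (cc t) (cc s') (cc t') hs1 hs2 ht2 ht1
      ht'1 ht'2 (cc_lb hs1 hs2) (cc_ub hs1 hs2) (cc_lb ht1 ht2) (cc_ub ht1 ht2)
      (cc_lb ht'1 ht'2) (cc_ub ht'1 ht'2) hB hA' hs'1 hs'2
      (cc_lb hs'1 hs'2) (cc_ub hs'1 hs'2)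
    simp only [dotL_apply, mid_apply, f0_0, f0_1, f0_2, f1_0, f1_1, f1_2,
      f2_0, f2_1, f2_2, n12_0, n12_1, n12_2, n23_0, n23_1, n23_2, n31_0, n31_1, n31_2]
    nlinarith [key, hA2, hB2]
  · have key := ineqC s t t' s' (cc s) (cc t') (cc t) (cc s') hs1 hs2 ht2 ht1
      hs'1 hs'2 (cc_lb hs1 hs2) (cc_ub hs1 hs2) (cc_lb ht1 ht2) (cc_ub ht1 ht2)
      (cc_lb hs'1 hs'2) (cc_ub hs'1 hs'2) hA hB' ht'1 ht'2
      (cc_lb ht'1 ht'2) (cc_ub ht'1 ht'2)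
    simp only [dotL_apply, mid_apply, f0_0, f0_1, f0_2, f1_0, f1_1, f1_2,
      f2_0, f2_1, f2_2, n12_0, n12_1, n12_2, n23_0, n23_1, n23_2, n31_0, n31_1, n31_2]
    nlinarith [key, hA2, hB2]
  · have hor : s ≠ s' ∨ t ≠ t' := by
      by_contra hcon; push_neg at hcon
      obtain ⟨h1, h2⟩ := hcon; rw [h1, h2] at hne; exact hne rfl
    have key := ineqA s t s' t' (cc s) (cc s') (cc t) (cc t') hs1 (cc_lb ht1 ht2)
      hA hA' hB hB' hor
    simp only [dotL_apply, mid_apply, f0_0, f0_1, f0_2, f1_0, f1_1, f1_2,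
      f2_0, f2_1, f2_2, n12_0, n12_1, n12_2, n23_0, n23_1, n23_2, n31_0, n31_1, n31_2]
    nlinarith [key, hA2, hB2]


lemma notin_hull {S : Set (Fin 3 → ℝ)} {p : Fin 3 → ℝ} (n : Fin 3 → ℝ)
    (h : ∀ q ∈ S, q ≠ p → dotL n q < dotL n p) : p ∉ convexHull ℝ (S \ {p}) := by
  intro hp
  have hcv : Convex ℝ {x : Fin 3 → ℝ | dotL n x < dotL n p} :=
    convex_halfSpace_lt (LinearMap.isLinear (dotL n)) _
  have hsub : S \ {p} ⊆ {x | dotL n x < dotL n p} := fun q hq =>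
    h q hq.1 (by simpa using hq.2)
  have := convexHull_min hsub hcv hp
  simp only [Set.mem_setOf_eq] at this
  exact lt_irrefl _ this

def M12 (k : ℕ) : Finset (Fin 3 → ℝ) :=
  ((T k) ×ˢ (T k)).image (fun p => midpoint ℝ (f0 p.1) (f1 p.2))
def M23 (k : ℕ) : Finset (Fin 3 → ℝ) :=
  ((T k) ×ˢ (T k)).image (fun p => midpoint ℝ (f1 p.1) (f2 p.2))
def M31 (k : ℕ) : Finset (Fin 3 → ℝ) :=
  ((T k) ×ˢ (T k)).image (fun p => midpoint ℝ (f2 p.1) (f0 p.2))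

lemma midSet_eq (k : ℕ) : midSet (BB k) = ↑(M12 k ∪ M23 k ∪ M31 k) := by
  ext x
  constructor
  · intro hx
    obtain ⟨s, hs, t, ht, hc⟩ := mem_midSet hx
    simp only [Finset.coe_union, Set.mem_union, M12, M23, M31, Finset.mem_coe,
      Finset.mem_image, Finset.mem_product]
    rcases hc with rfl | rfl | rfl
    · exact Or.inl (Or.inl ⟨(s, t), ⟨hs, ht⟩, rfl⟩)
    · exact Or.inl (Or.inr ⟨(s, t), ⟨hs, ht⟩, rfl⟩)
    · exact Or.inr ⟨(s, t), ⟨hs, ht⟩, rfl⟩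
  · intro hx
    simp only [Finset.coe_union, Set.mem_union, M12, M23, M31, Finset.mem_coe,
      Finset.mem_image, Finset.mem_product] at hx
    rcases hx with (⟨⟨a, b⟩, ⟨ha, hb⟩, rfl⟩ | ⟨⟨a, b⟩, ⟨ha, hb⟩, rfl⟩) | ⟨⟨a, b⟩, ⟨ha, hb⟩, rfl⟩
    · exact ⟨0, 1, by decide, f0 a, by rw [BB_0]; exact Finset.mem_image_of_mem _ ha,
        f1 b, by rw [BB_1]; exact Finset.mem_image_of_mem _ hb, rfl⟩
    · exact ⟨1, 2, by decide, f1 a, by rw [BB_1]; exact Finset.mem_image_of_mem _ ha,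
        f2 b, by rw [BB_2]; exact Finset.mem_image_of_mem _ hb, rfl⟩
    · exact ⟨2, 0, by decide, f2 a, by rw [BB_2]; exact Finset.mem_image_of_mem _ ha,
        f0 b, by rw [BB_0]; exact Finset.mem_image_of_mem _ hb, rfl⟩

lemma bound12 {k : ℕ} {x : Fin 3 → ℝ} (h : x ∈ M12 k) : 100 ≤ x 0 := by
  simp only [M12, Finset.mem_image, Finset.mem_product] at h
  obtain ⟨⟨a, b⟩, ⟨ha, hb⟩, rfl⟩ := h
  obtain ⟨ha1, ha2⟩ := T_mem ha
  have := cc_lb ha1 ha2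
  simp only [mid_apply, f0_0, f1_0]
  linarith

lemma bound23 {k : ℕ} {x : Fin 3 → ℝ} (h : x ∈ M23 k) : x 0 ≤ 50 + 3/10 := by
  simp only [M23, Finset.mem_image, Finset.mem_product] at h
  obtain ⟨⟨a, b⟩, ⟨ha, hb⟩, rfl⟩ := h
  obtain ⟨hb1, hb2⟩ := T_mem hb
  simp only [mid_apply, f1_0, f2_0]
  linarith

lemma bound31 {k : ℕ} {x : Fin 3 → ℝ} (h : x ∈ M31 k) : 50 + 6/10 ≤ x 0 ∧ x 0 ≤ 51 := by
  simp only [M31, Finset.mem_image, Finset.mem_product] at h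
  obtain ⟨⟨a, b⟩, ⟨ha, hb⟩, rfl⟩ := h
  obtain ⟨ha1, ha2⟩ := T_mem ha
  obtain ⟨hb1, hb2⟩ := T_mem hb
  have h1 := cc_lb hb1 hb2
  have h2 := cc_ub hb1 hb2
  simp only [mid_apply, f2_0, f0_0]
  constructor <;> linarith

lemma inj12 (k : ℕ) : Set.InjOn (fun p : ℝ × ℝ => midpoint ℝ (f0 p.1) (f1 p.2))
    ↑((T k) ×ˢ (T k)) := by
  rintro ⟨a, b⟩ ha ⟨a', b'⟩ hb h
  simp only [Finset.coe_product, Set.mem_prod, Finset.mem_coe] at ha hb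
  obtain ⟨ha1, ha2⟩ := T_mem ha.1; obtain ⟨ha1', ha2'⟩ := T_mem hb.1
  have h0 := congrFun h 0
  have h2 := congrFun h 2
  simp only [mid_apply, f0_0, f1_0, f0_2, f1_2] at h0 h2
  have hcc : cc a = cc a' := by linarith
  have : a = a' := cc_inj ha1 ha2 ha1' ha2' hcc
  have : b = b' := by linarith
  simp_all

lemma inj23 (k : ℕ) : Set.InjOn (fun p : ℝ × ℝ => midpoint ℝ (f1 p.1) (f2 p.2))
    ↑((T k) ×ˢ (T k)) := by
  rintro ⟨a, b⟩ ha ⟨a', b'⟩ hb h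
  simp only [Finset.coe_product, Set.mem_prod, Finset.mem_coe] at ha hb
  obtain ⟨ha1, ha2⟩ := T_mem ha.1; obtain ⟨ha1', ha2'⟩ := T_mem hb.1
  have h0 := congrFun h 0
  have h1 := congrFun h 1
  simp only [mid_apply, f1_0, f2_0, f1_1, f2_1] at h0 h1
  have hcc : cc a = cc a' := by linarith
  have : a = a' := cc_inj ha1 ha2 ha1' ha2' hcc
  have : b = b' := by linarith
  simp_all

lemma inj31 (k : ℕ) : Set.InjOn (fun p : ℝ × ℝ => midpoint ℝ (f2 p.1) (f0 p.2))
    ↑((T k) ×ˢ (T k)) := by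
  rintro ⟨a, b⟩ ha ⟨a', b'⟩ hb h
  simp only [Finset.coe_product, Set.mem_prod, Finset.mem_coe] at ha hb
  obtain ⟨ha1, ha2⟩ := T_mem ha.1; obtain ⟨ha1', ha2'⟩ := T_mem hb.1
  have h1 := congrFun h 1
  have h2 := congrFun h 2
  simp only [mid_apply, f2_1, f0_1, f2_2, f0_2] at h1 h2
  have hcc : cc a = cc a' := by linarith
  have : a = a' := cc_inj ha1 ha2 ha1' ha2' hcc
  have : b = b' := by linarith
  simp_all

end ThreeAux

open ThreeAux in
/-- For every `k` there are three `k`-point sets `B₁, B₂, B₃ ⊂ ℝ³` such that the set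
`½(B₁+B₂) ∪ ½(B₂+B₃) ∪ ½(B₃+B₁)` of midpoints between different sets has exactly
`3k²` points and is convexly independent. -/
theorem three_sets_construction (k : ℕ) :
    ∃ B : Fin 3 → Finset (Fin 3 → ℝ),
      (∀ i, (B i).card = k) ∧
      ConvInd (midSet B) ∧
      (midSet B).ncard = 3 * k ^ 2 := by
  refine ⟨BB k, ?_, ?_, ?_⟩
  · intro i
    have h0 : ((T k).image f0).card = k := by
      rw [Finset.card_image_of_injective _ (fun a b h => congrFun h 1), T_card]
    have h1 : ((T k).image f1).card = k := by
      rw [Finset.card_image_of_injective _ (fun a b h => congrFun h 2), T_card]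
    have h2 : ((T k).image f2).card = k := by
      rw [Finset.card_image_of_injective _ (fun a b h => congrFun h 0), T_card]
    fin_cases i
    · exact h0
    · exact h1
    · exact h2
  · intro p hp
    obtain ⟨s, hs, t, ht, hc⟩ := mem_midSet hp
    rcases hc with rfl | rfl | rfl
    · exact notin_hull (n12 s t) (fun q hq hne => sep12 hs ht hq hne)
    · exact notin_hull (n23 s t) (fun q hq hne => sep23 hs ht hq hne)
    · exact notin_hull (n31 s t) (fun q hq hne => sep31 hs ht hq hne)
  · have d1 : Disjoint (M12 k) (M23 k) := by
      rw [Finset.disjoint_left]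
      intro x h1 h2
      have := bound12 h1; have := bound23 h2; linarith
    have d2 : Disjoint (M12 k ∪ M23 k) (M31 k) := by
      rw [Finset.disjoint_left]
      intro x h1 h2
      obtain ⟨hb1, hb2⟩ := bound31 h2
      rcases Finset.mem_union.mp h1 with h | h
      · have := bound12 h; linarith
      · have := bound23 h; linarith
    have c12 : (M12 k).card = k ^ 2 := by
      rw [M12, Finset.card_image_of_injOn (inj12 k), Finset.card_product, T_card]; ring
    have c23 : (M23 k).card = k ^ 2 := by
      rw [M23, Finset.card_image_of_injOn (inj23 k), Finset.card_product, T_card]; ring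
    have c31 : (M31 k).card = k ^ 2 := by
      rw [M31, Finset.card_image_of_injOn (inj31 k), Finset.card_product, T_card]; ring
    rw [midSet_eq, Set.ncard_coe_finset, Finset.card_union_of_disjoint d2,
      Finset.card_union_of_disjoint d1, c12, c23, c31]
    ring
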